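/- Let $T: X^d \to \mathbb{F}$ be a $d$-tensor over a field $\mathbb{F}$ on a finite set $X$, with $d \geq 2$, such that $T(x_1,\dots,x_d) = 0$ unless $x_1 = x_2 = \cdots = x_d$. Then the slice rank of $T$ equals the number of $x \in X$ with $T(x,\dots,x) \neq 0$. -/

import Mathlib

open scoped BigOperators

/-- A tensor `T : (∀ i, X i) → F` has slice rank at most one: it factors as
`T x = u (x i) * v x` with `v` not depending on the `i`-th coordinate. -/
def IsSliceOne {F : Type*} [Field F] {d : ℕ} {X : Fin d → Type*}
    (T : (∀ i, X i) → F) : Prop :=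
  ∃ (i : Fin d) (u : X i → F) (v : (∀ i, X i) → F),
    (∀ x y : ∀ i, X i, (∀ j, j ≠ i → x j = y j) → v x = v y) ∧
    ∀ x, T x = u (x i) * v x

/-- Slice rank of a function tensor: least number of slice-rank-one summands. -/
noncomputable def sliceRank {F : Type*} [Field F] {d : ℕ} {X : Fin d → Type*}
    (T : (∀ i, X i) → F) : ℕ :=
  sInf {r | ∃ S : Fin r → ((∀ i, X i) → F),
    (∀ k, IsSliceOne (S k)) ∧ ∀ x, T x = ∑ k, S k x}

set_option maxHeartbeats 1600000

lemma aux_exists_max_support {F : Type*} [Field F] {Y : Type*} [Fintype Y]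
    (V : Submodule F (Y → F)) :
    ∃ f : Y → F, f ∈ V ∧ Module.finrank F V ≤ Set.ncard {y | f y ≠ 0} := by
  classical
  set A : Set ℕ := (fun f : V => Set.ncard {y | (f : Y → F) y ≠ 0}) '' Set.univ with hA
  have hne : A.Nonempty := ⟨_, ⟨0, Set.mem_univ _, rfl⟩⟩
  have hbdd : BddAbove A := by
    refine ⟨Fintype.card Y, ?_⟩
    rintro n ⟨g, -, rfl⟩
    have h := Set.ncard_le_ncard (Set.subset_univ {y | (g : Y → F) y ≠ 0}) Set.finite_univ
    rwa [Set.ncard_univ, Nat.card_eq_fintype_card] at h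
  obtain ⟨⟨f, hfV⟩, -, hf⟩ := Nat.sSup_mem hne hbdd
  have hmax : ∀ g ∈ V, Set.ncard {y | g y ≠ 0} ≤ Set.ncard {y | f y ≠ 0} := by
    intro g hg
    simp only [] at hf
    rw [hf]
    exact le_csSup hbdd ⟨⟨g, hg⟩, Set.mem_univ _, rfl⟩
  set s : Set Y := {y | f y ≠ 0} with hs
  haveI : Fintype s := Fintype.ofFinite s
  refine ⟨f, hfV, ?_⟩
  have hinj : Function.Injective (fun (g : V) => (fun y : s => (g : Y → F) y)) := by
    intro g₁ g₂ hgg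
    by_contra hne'
    set g : Y → F := (g₁ : Y → F) - g₂ with hg
    have hgV : g ∈ V := V.sub_mem g₁.2 g₂.2
    have hgs : ∀ y ∈ s, g y = 0 := by
      intro y hy
      have := congrFun hgg ⟨y, hy⟩
      simpa [hg, sub_eq_zero] using this
    have hgne : ∃ a, g a ≠ 0 := by
      by_contra h
      push_neg at h
      exact hne' (Subtype.ext (by funext y; have := h y; simpa [hg, sub_eq_zero] using this))
    obtain ⟨a, ha⟩ := hgne
    have has : a ∉ s := fun h => ha (hgs a h)
    have hsub : insert a s ⊆ {y | f y + g y ≠ 0} := by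
      rintro y (rfl | hy)
      · have : f y = 0 := by simpa [hs] using has
        simpa [this] using ha
      · have : g y = 0 := hgs y hy
        simpa [this, hs] using hy
    have hle : Set.ncard (insert a s) ≤ Set.ncard {y | f y + g y ≠ 0} :=
      Set.ncard_le_ncard hsub (Set.toFinite _)
    rw [Set.ncard_insert_of_notMem has (Set.toFinite _)] at hle
    have := hmax (f + g) (V.add_mem hfV hgV)
    simp only [Pi.add_apply] at this
    omega
  have hlin : Module.finrank F V ≤ Module.finrank F (s → F) := by
    refine LinearMap.finrank_le_finrank_of_injective (f := ⟨⟨fun (g : V) => (fun y : s => (g : Y → F) y), fun _ _ => rfl⟩, fun _ _ => rfl⟩) hinj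
  rw [Module.finrank_fintype_fun_eq_card] at hlin
  rwa [← Nat.card_coe_set_eq, Nat.card_eq_fintype_card]

lemma aux_exists_good_f {F : Type*} [Field F] {X : Type*} [Fintype X] (Γ : Set X)
    {κ : Type*} [Fintype κ] (u : κ → X → F) :
    ∃ f : X → F, (∀ a, a ∉ Γ → f a = 0) ∧ (∀ k, ∑ a, f a * u k a = 0) ∧
      Γ.ncard ≤ Set.ncard {a | f a ≠ 0} + Fintype.card κ := by
  classical
  let L : (Γ → F) →ₗ[F] (κ → F) :=
    { toFun := fun g k => ∑ a : Γ, g a * u k a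
      map_add' := by
        intro g₁ g₂; funext k
        simp [add_mul, Finset.sum_add_distrib]
      map_smul' := by
        intro c g; funext k
        simp [Finset.mul_sum, mul_assoc] }
  have hker : Fintype.card Γ ≤ Fintype.card κ + Module.finrank F (LinearMap.ker L) := by
    have h1 := LinearMap.finrank_range_add_finrank_ker L
    have h2 : Module.finrank F (LinearMap.range L) ≤ Fintype.card κ := by
      have := Submodule.finrank_le (LinearMap.range L)
      rwa [Module.finrank_fintype_fun_eq_card] at this
    rw [Module.finrank_fintype_fun_eq_card] at h1
    omega
  obtain ⟨g, hgker, hgcard⟩ := aux_exists_max_support (F := F) (LinearMap.ker L)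
  refine ⟨fun x => if h : x ∈ Γ then g ⟨x, h⟩ else 0, fun a ha => dif_neg ha, ?_, ?_⟩
  · intro k
    have h0 : ∀ x : X, x ∉ Γ → (if h : x ∈ Γ then g ⟨x, h⟩ else 0) * u k x = 0 := by
      intro x hx; rw [dif_neg hx, zero_mul]
    have hsplit := Fintype.sum_subtype_add_sum_subtype (· ∈ Γ)
      (fun x : X => (if h : x ∈ Γ then g ⟨x, h⟩ else 0) * u k x)
    rw [← hsplit, Finset.sum_eq_zero (fun (x : {x : X // x ∉ Γ}) _ => h0 x.1 x.2), add_zero]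
    have heq : ∀ x : Γ, (if h : (x : X) ∈ Γ then g ⟨(x : X), h⟩ else 0) * u k x = g x * u k x :=
      fun x => by rw [dif_pos x.2, Subtype.eta]
    rw [Finset.sum_congr rfl (fun x _ => heq x)]
    have hk := congrFun (LinearMap.mem_ker.mp hgker) k
    simpa [L] using hk
  · have himg : {x : X | (if h : x ∈ Γ then g ⟨x, h⟩ else 0) ≠ 0} =
        Subtype.val '' {y : Γ | g y ≠ 0} := by
      ext x
      constructor
      · intro hx
        have hxΓ : x ∈ Γ := by by_contra h; simp only [Set.mem_setOf_eq, dif_neg h] at hx; exact hx rfl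
        have hx' : (if h : x ∈ Γ then g ⟨x, h⟩ else 0) ≠ 0 := hx
        rw [dif_pos hxΓ] at hx'
        exact ⟨⟨x, hxΓ⟩, hx', rfl⟩
      · rintro ⟨⟨y, hy⟩, hgy, rfl⟩
        show (if h : y ∈ Γ then g ⟨y, h⟩ else 0) ≠ 0
        rw [dif_pos hy]
        exact hgy
    rw [himg, Set.ncard_image_of_injective _ Subtype.val_injective]
    have hΓcard : Γ.ncard = Fintype.card Γ := by
      rw [← Nat.card_coe_set_eq, Nat.card_eq_fintype_card]
    have hgcard' : Set.ncard {y : Γ | g y ≠ 0} ≥ Module.finrank F (LinearMap.ker L) := hgcard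
    omega

lemma aux_lower_two {F : Type*} [Field F] {X : Type*} [Fintype X]
    (T : (Fin 2 → X) → F) (hdiag : ∀ x : Fin 2 → X, (¬ ∀ i j, x i = x j) → T x = 0)
    (κ : Type) [Fintype κ] (S : κ → ((Fin 2 → X) → F))
    (hS : ∀ k, IsSliceOne (S k)) (hsum : ∀ x, T x = ∑ k, S k x) :
    Set.ncard {a : X | T (fun _ => a) ≠ 0} ≤ Fintype.card κ := by
  classical
  choose i u v hv huv using hS
  set Γ : Set X := {a : X | T (fun _ => a) ≠ 0} with hΓ
  have h01 : ∀ j : Fin 2, j = 0 ∨ j = 1 := by decide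
  set e : κ → (X → F) := fun k => if i k = 0 then (fun b => v k (fun _ => b)) else u k with he
  set pair : X → X → (Fin 2 → X) := fun a b => fun j => if j = 0 then a else b with hpair
  have hpaircon : ∀ a : X, pair a a = (fun _ => a) := by
    intro a; funext j; simp [hpair]
  have hterm : ∀ k a b, S k (pair a b) =
      (if i k = 0 then u k a else v k (fun _ => a)) * e k b := by
    intro k a b
    rcases h01 (i k) with h | h
    · have hveq : v k (pair a b) = v k (fun _ => b) := by
        apply hv
        intro j hj
        rcases h01 j with rfl | rfl
        · exact absurd rfl (by rwa [h] at hj)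
        · simp [hpair]
      rw [huv k, hveq, h]
      simp [he, hpair, h]
    · have hveq : v k (pair a b) = v k (fun _ => a) := by
        apply hv
        intro j hj
        rcases h01 j with rfl | rfl
        · simp [hpair]
        · exact absurd rfl (by rwa [h] at hj)
      rw [huv k, hveq, h]
      have : (1 : Fin 2) ≠ 0 := by decide
      simp [he, hpair, h, this, mul_comm]
  have hmem : ∀ a ∈ Γ, Pi.single a (1 : F) ∈ Submodule.span F (Set.range e) := by
    intro a ha
    have hha : (fun b => T (pair a b)) =
        ∑ k, (if i k = 0 then u k a else v k (fun _ => a)) • e k := by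
      funext b
      rw [hsum (pair a b)]
      simp only [Finset.sum_apply, Pi.smul_apply, smul_eq_mul]
      exact Finset.sum_congr rfl (fun k _ => hterm k a b)
    have haT : T (fun _ => a) ≠ 0 := ha
    have hdelta : Pi.single a (1 : F) = (T (fun _ => a))⁻¹ • (fun b => T (pair a b)) := by
      funext c
      rw [Pi.smul_apply, smul_eq_mul]
      by_cases hc : c = a
      · subst hc
        rw [hpaircon]
        simp [Pi.single_apply, inv_mul_cancel₀ haT]
      · have hTz : T (pair a c) = 0 := by
          apply hdiag
          intro hcon
          have h0 : pair a c 0 = a := by simp [hpair]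
          have h1 : pair a c 1 = c := by simp [hpair]
          exact hc (by rw [← h1, ← h0]; exact hcon 1 0)
        simp [Pi.single_apply, hc, hTz]
    rw [hdelta, hha]
    refine Submodule.smul_mem _ _ (Submodule.sum_mem _ (fun k _ => Submodule.smul_mem _ _ ?_))
    exact Submodule.subset_span ⟨k, rfl⟩
  -- linear independence of single functions
  have li : LinearIndependent F (fun a : X => Pi.single a (1 : F)) := by
    have h := (Pi.basisFun F X).linearIndependent
    convert h using 1
    funext a; rw [Pi.basisFun_apply]
  have liΓ : LinearIndependent F (fun a : Γ => (Pi.single (a : X) (1 : F) : X → F)) :=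
    li.comp Subtype.val Subtype.val_injective
  set W := Submodule.span F (Set.range e) with hW
  have liW : LinearIndependent F (fun a : Γ => (⟨(Pi.single (a : X) (1 : F) : X → F), hmem a a.2⟩ : W)) := by
    apply LinearIndependent.of_comp W.subtype
    exact liΓ
  have hcard : Fintype.card Γ ≤ Module.finrank F W := liW.fintype_card_le_finrank
  have hWle : Module.finrank F W ≤ Fintype.card κ := by
    have h1 := finrank_span_le_card (R := F) (Set.range e)
    have h2 : (Set.range e).toFinset.card ≤ Fintype.card κ := by
      rw [Set.toFinset_range]
      exact (Finset.card_image_le).trans (by simp)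
    exact h1.trans h2
  have : Γ.ncard = Fintype.card Γ := by
    rw [← Nat.card_coe_set_eq, Nat.card_eq_fintype_card]
  omega

lemma aux_lower {F : Type*} [Field F] {X : Type*} [Fintype X] :
    ∀ (e : ℕ) (T : (Fin (e+2) → X) → F),
      (∀ x : Fin (e+2) → X, (¬ ∀ i j, x i = x j) → T x = 0) →
      ∀ (κ : Type) [Fintype κ] (S : κ → ((Fin (e+2) → X) → F)),
        (∀ k, IsSliceOne (S k)) → (∀ x, T x = ∑ k, S k x) →
        Set.ncard {a : X | T (fun _ => a) ≠ 0} ≤ Fintype.card κ := by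
  intro e
  induction e with
  | zero => intro T hdiag κ _ S hS hsum; exact aux_lower_two T hdiag κ S hS hsum
  | succ e ih =>
    intro T hdiag κ _ S hS hsum
    classical
    choose i u v hv huv using hS
    set Γ : Set X := {a : X | T (fun _ => a) ≠ 0} with hΓ
    set lst : Fin (e + 1 + 2) := Fin.last (e + 2) with hlst
    obtain ⟨f, hfΓ, horth, hcard⟩ :=
      aux_exists_good_f (F := F) Γ (κ := {k : κ // i k = lst}) (fun k => u k.1)
    set T' : (Fin (e + 2) → X) → F := fun y => ∑ a, f a * T (Fin.snoc y a) with hT'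
    -- diagonality of T'
    have hdiag' : ∀ y : Fin (e + 2) → X, (¬ ∀ i j, y i = y j) → T' y = 0 := by
      intro y hy
      refine Finset.sum_eq_zero (fun a _ => ?_)
      have : T (Fin.snoc y a) = 0 := by
        apply hdiag
        intro hcon
        exact hy (fun i j => by
          have h1 := hcon i.castSucc j.castSucc
          rwa [Fin.snoc_castSucc, Fin.snoc_castSucc] at h1)
      rw [this, mul_zero]
    -- diagonal values of T'
    have hsnocconst : ∀ a : X, Fin.snoc (fun _ => a) a = (fun _ => a : Fin (e+1+2) → X) := by
      intro a
      funext j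
      refine Fin.lastCases ?_ (fun m => ?_) j
      · rw [Fin.snoc_last]
      · rw [Fin.snoc_castSucc]
    have hdiagval : ∀ a : X, T' (fun _ => a) = f a * T (fun _ => a) := by
      intro a
      have h1 : T' (fun _ => a) = f a * T (Fin.snoc (fun _ => a) a) := by
        refine Finset.sum_eq_single a (fun b _ hb => ?_) (fun h => absurd (Finset.mem_univ a) h)
        have hz : T (Fin.snoc (fun _ => a) b) = 0 := by
          apply hdiag
          intro hcon
          have h1 := hcon ((0 : Fin (e + 2)).castSucc) (Fin.last (e + 2))
          rw [Fin.snoc_castSucc, Fin.snoc_last] at h1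
          exact hb h1.symm
        rw [hz, mul_zero]
      rw [h1, hsnocconst a]
    -- new decomposition
    set κ' := {k : κ // i k ≠ lst} with hκ'
    set S' : κ' → (Fin (e + 2) → X) → F := fun k y =>
      u k.1 (y ((i k.1).castPred k.2)) * (∑ a, f a * v k.1 (Fin.snoc y a)) with hS'
    have hS'slice : ∀ k : κ', IsSliceOne (S' k) := by
      intro k
      refine ⟨(i k.1).castPred k.2, u k.1, fun y => ∑ a, f a * v k.1 (Fin.snoc y a), ?_, fun y => rfl⟩
      intro y z hyz
      refine Finset.sum_congr rfl (fun a _ => ?_)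
      congr 1
      apply hv
      intro j
      refine Fin.lastCases ?_ (fun m => ?_) j
      · intro _
        rw [Fin.snoc_last, Fin.snoc_last]
      · intro hj
        rw [Fin.snoc_castSucc, Fin.snoc_castSucc]
        apply hyz
        intro hm
        exact hj (by rw [hm, Fin.castSucc_castPred])
    by_cases hXne : Nonempty X
    swap
    · haveI : IsEmpty X := not_nonempty_iff.mp hXne
      have hempty : {a : X | T (fun _ => a) ≠ 0} = ∅ := Set.eq_empty_of_isEmpty _
      simp only [hΓ, hempty, Set.ncard_empty]
      exact Nat.zero_le _
    obtain ⟨a₀⟩ := hXne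
    have hsum' : ∀ y, T' y = ∑ k : κ', S' k y := by
      intro y
      set c : κ → F := fun k => ∑ a, f a * S k (Fin.snoc y a) with hcdef
      have h1 : T' y = ∑ k : κ, c k := by
        calc T' y = ∑ a, f a * T (Fin.snoc y a) := rfl
          _ = ∑ a, ∑ k : κ, f a * S k (Fin.snoc y a) := by
              refine Finset.sum_congr rfl (fun a _ => ?_)
              rw [hsum (Fin.snoc y a), Finset.mul_sum]
          _ = ∑ k : κ, c k := Finset.sum_comm
      have hzero : ∀ k : κ, i k = lst → c k = 0 := by
        intro k hk
        have hvk : ∀ a, v k (Fin.snoc y a) = v k (Fin.snoc y a₀) := by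
          intro a
          apply hv
          intro j
          refine Fin.lastCases ?_ (fun m => ?_) j
          · intro hj
            exact absurd hk.symm hj
          · intro _
            rw [Fin.snoc_castSucc, Fin.snoc_castSucc]
        have hck : c k = (∑ a, f a * u k a) * v k (Fin.snoc y a₀) := by
          rw [Finset.sum_mul]
          refine Finset.sum_congr rfl (fun a _ => ?_)
          rw [huv k (Fin.snoc y a)]
          have h2 : (Fin.snoc y a : Fin (e+1+2) → X) (i k) = a := by
            rw [hk, hlst]
            exact Fin.snoc_last _ _
          rw [h2, hvk a]
          ring
        rw [hck, horth ⟨k, hk⟩, zero_mul]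
      have hck : ∀ (k : κ) (h : i k ≠ lst), c k = S' ⟨k, h⟩ y := by
        intro k hk
        show (∑ a, f a * S k (Fin.snoc y a)) = _
        rw [hS']
        simp only []
        rw [Finset.mul_sum]
        refine Finset.sum_congr rfl (fun a _ => ?_)
        rw [huv k (Fin.snoc y a)]
        have h2 : (Fin.snoc y a : Fin (e+1+2) → X) (i k) = y ((i k).castPred hk) := by
          conv_lhs => rw [← Fin.castSucc_castPred (i k) hk]
          rw [Fin.snoc_castSucc]
        rw [h2]
        ring
      have h3 : ∑ k : κ, c k = ∑ k : κ', c k.1 := by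
        have hfil : ∑ k ∈ Finset.univ.filter (fun k => i k ≠ lst), c k = ∑ k : κ, c k := by
          refine Finset.sum_filter_of_ne (fun k _ hkne => ?_)
          intro hk
          exact hkne (hzero k hk)
        rw [← hfil]
        exact Finset.sum_subtype _ (fun k => by simp) c
      rw [h1, h3]
      exact Finset.sum_congr rfl (fun k _ => hck k.1 k.2)
    have hIH := ih T' hdiag' κ' S' hS'slice hsum'
    have hsupp : {a : X | T' (fun _ => a) ≠ 0} = {a : X | f a ≠ 0} := by
      ext a
      simp only [Set.mem_setOf_eq, hdiagval a]
      constructor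
      · intro h hfa
        exact h (by rw [hfa, zero_mul])
      · intro hfa
        have hT : T (fun _ => a) ≠ 0 := fun h => hfa (hfΓ a (fun hmem => hmem h))
        exact mul_ne_zero hfa hT
    rw [hsupp] at hIH
    have hcards : Fintype.card κ' + Fintype.card {k : κ // i k = lst} ≤ Fintype.card κ := by
      have h1 : Fintype.card {k : κ // ¬ (i k = lst)} = Fintype.card κ - Fintype.card {k : κ // i k = lst} :=
        Fintype.card_subtype_compl _
      have h2 : Fintype.card {k : κ // i k = lst} ≤ Fintype.card κ := Fintype.card_subtype_le _
      have h3 : Fintype.card κ' = Fintype.card {k : κ // ¬ (i k = lst)} := rfl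
      omega
    calc Set.ncard {a : X | T (fun _ => a) ≠ 0}
        ≤ Set.ncard {a : X | f a ≠ 0} + Fintype.card {k : κ // i k = lst} := hcard
      _ ≤ Fintype.card κ' + Fintype.card {k : κ // i k = lst} := by omega
      _ ≤ Fintype.card κ := hcards

lemma aux_upper_mem {F : Type*} [Field F] {e : ℕ} {X : Type*} [Fintype X]
    (T : (Fin (e+2) → X) → F)
    (hdiag : ∀ x : Fin (e+2) → X, (¬ ∀ i j, x i = x j) → T x = 0) :
    ∃ S : Fin (Set.ncard {a : X | T (fun _ => a) ≠ 0}) → ((Fin (e+2) → X) → F),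
      (∀ k, IsSliceOne (S k)) ∧ ∀ x, T x = ∑ k, S k x := by
  classical
  set Γ : Set X := {a : X | T (fun _ => a) ≠ 0} with hΓ
  set n := Γ.ncard with hn
  have hcardΓ : Fintype.card Γ = n := by
    rw [hn, ← Nat.card_coe_set_eq, Nat.card_eq_fintype_card]
  set E : Fin n ≃ Γ := (Fintype.equivFinOfCardEq hcardΓ).symm with hE
  set i₀ : Fin (e+2) := 0 with hi₀
  refine ⟨fun k x => if x i₀ = (E k : X) then T x else 0, fun k => ?_, fun x => ?_⟩
  · refine ⟨i₀, fun t => if t = (E k : X) then 1 else 0,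
      fun x => T (Function.update x i₀ (E k : X)), ?_, fun x => ?_⟩
    · intro x y hxy
      have hupd : Function.update x i₀ (E k : X) = Function.update y i₀ (E k : X) := by
        funext j
        rcases eq_or_ne j i₀ with rfl | hj
        · rw [Function.update_self, Function.update_self]
        · rw [Function.update_of_ne hj, Function.update_of_ne hj]
          exact hxy j hj
      show T (Function.update x i₀ (E k : X)) = T (Function.update y i₀ (E k : X))
      rw [hupd]
    · show (if x i₀ = (E k : X) then T x else 0) =
        (if x i₀ = (E k : X) then (1:F) else 0) * T (Function.update x i₀ (E k : X))
      by_cases hx : x i₀ = (E k : X)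
      · have hupd : Function.update x i₀ (E k : X) = x := by
          funext j
          by_cases hj : j = i₀
          · subst hj; simp [hx.symm]
          · rw [Function.update_of_ne hj]
        rw [if_pos hx, if_pos hx, hupd, one_mul]
      · rw [if_neg hx, if_neg hx, zero_mul]
  · by_cases hx : x i₀ ∈ Γ
    · rw [Finset.sum_eq_single (E.symm ⟨x i₀, hx⟩) (fun k _ hk => ?_)
        (fun h => absurd (Finset.mem_univ _) h)]
      · show T x = if x i₀ = (E (E.symm ⟨x i₀, hx⟩) : X) then T x else 0
        rw [Equiv.apply_symm_apply, if_pos rfl]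
      · show (if x i₀ = (E k : X) then T x else 0) = 0
        refine if_neg (fun hcon => hk ?_)
        have hEk : E k = ⟨x i₀, hx⟩ := Subtype.ext hcon.symm
        rw [← hEk, Equiv.symm_apply_apply]
    · have hTz : T x = 0 := by
        by_cases hcon : ∀ i j, x i = x j
        · have hxc : x = fun _ => x i₀ := funext (fun j => hcon j i₀)
          rw [hxc]
          by_contra h
          exact hx h
        · exact hdiag x hcon
      rw [hTz]
      symm
      refine Finset.sum_eq_zero (fun k _ => ?_)
      show (if x i₀ = (E k : X) then T x else 0) = 0
      rw [hTz, ite_self]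

theorem sliceRank_diagonal {F : Type*} [Field F] {d : ℕ} (hd : 2 ≤ d)
    (X : Type*) [Fintype X] (T : (Fin d → X) → F)
    (hdiag : ∀ x : Fin d → X, (¬ ∀ i j, x i = x j) → T x = 0) :
    sliceRank T = Set.ncard {a : X | T (fun _ => a) ≠ 0} := by
  obtain ⟨e, rfl⟩ : ∃ e, d = e + 2 := ⟨d - 2, by omega⟩
  classical
  obtain ⟨S₀, hS₀, hsum₀⟩ := aux_upper_mem T hdiag
  have hmem : Set.ncard {a : X | T (fun _ => a) ≠ 0} ∈
      {r | ∃ S : Fin r → ((Fin (e+2) → X) → F),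
        (∀ k, IsSliceOne (S k)) ∧ ∀ x, T x = ∑ k, S k x} :=
    ⟨S₀, hS₀, hsum₀⟩
  refine le_antisymm (Nat.sInf_le hmem) ?_
  refine le_csInf ⟨_, hmem⟩ ?_
  rintro r ⟨S, hS, hsum⟩
  have h := aux_lower e T hdiag (Fin r) S hS hsum
  simpa using h
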